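/- Let h₀ ∈ H with P h₀ = 0, let h_k := ∑_{i=0}^{k} (P∘R∘P∘R)^i h₀, let N := P∘R∘P + Q∘R∘Q and Z := P∘R∘Q + Q∘R∘P, and let χ be the orthogonal projection of H onto the closed subspace ker Z. Then Q(R h_k) − Q(R(Q(R h_k))) converges in norm as k → ∞ to (N − I)(χ h₀). -/

import Mathlib

open Filter
open scoped InnerProductSpace

set_option maxHeartbeats 1000000 in
/-- For `h₀` with `P h₀ = 0` and `h_k := ∑_{i=0}^{k} (P∘R∘P∘R)^i h₀`,
with `N := P∘R∘P + Q∘R∘Q`, `Z := P∘R∘Q + Q∘R∘P` (`Q = I − P`) and `χ` the orthogonal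
projection onto `ker Z`, the vectors `Q(R h_k) − Q(R(Q(R h_k)))` converge in norm to
`(N − I)(χ h₀)` as `k → ∞`. -/
theorem stmt16 {H : Type*} [NormedAddCommGroup H] [InnerProductSpace ℂ H] [CompleteSpace H]
    (R P : H →L[ℂ] H)
    (hR : IsSelfAdjoint R) (hR2 : R ∘L R = 1)
    (hP : IsSelfAdjoint P) (hP2 : P ∘L P = P)
    (N Z : H →L[ℂ] H)
    (hN : N = P ∘L R ∘L P + ((1 : H →L[ℂ] H) - P) ∘L R ∘L ((1 : H →L[ℂ] H) - P))
    (hZ : Z = P ∘L R ∘L ((1 : H →L[ℂ] H) - P) + ((1 : H →L[ℂ] H) - P) ∘L R ∘L P)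
    (χ : H →L[ℂ] H) (hχ : IsSelfAdjoint χ) (hχ2 : χ ∘L χ = χ)
    (hχrange : LinearMap.range (χ : H →ₗ[ℂ] H) = LinearMap.ker (Z : H →ₗ[ℂ] H))
    (h₀ : H) (hh₀ : P h₀ = 0) :
    Tendsto
      (fun k : ℕ =>
        ((1 : H →L[ℂ] H) - P)
            (R (∑ i ∈ Finset.range (k + 1), ((P ∘L R ∘L P ∘L R) ^ i) h₀)) -
          ((1 : H →L[ℂ] H) - P)
            (R (((1 : H →L[ℂ] H) - P)
              (R (∑ i ∈ Finset.range (k + 1), ((P ∘L R ∘L P ∘L R) ^ i) h₀)))))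
      atTop (nhds ((N - 1) (χ h₀))) := by
  classical
  have hP2' : P * P = P := hP2
  have hR2' : R * R = 1 := hR2
  have hχ2' : χ * χ = χ := hχ2
  have hPa : ∀ X : H →L[ℂ] H, P * (P * X) = P * X := fun X => by rw [← mul_assoc, hP2']
  have hRa : ∀ X : H →L[ℂ] H, R * (R * X) = X := fun X => by rw [← mul_assoc, hR2', one_mul]
  have hN' : N = P*R*P + (1-P)*R*(1-P) := by
    rw [hN]; simp only [← ContinuousLinearMap.mul_def]; noncomm_ring
  have hZ' : Z = P*R*(1-P) + (1-P)*R*P := by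
    rw [hZ]; simp only [← ContinuousLinearMap.mul_def]; noncomm_ring
  have mulApp : ∀ (A B : H →L[ℂ] H) (x : H), (A*B) x = A (B x) := fun _ _ _ => rfl
  have appEq : ∀ (A B : H →L[ℂ] H), A = B → ∀ x : H, A x = B x := fun A B h x => h ▸ rfl
  have powS : ∀ (m : ℕ) (x : H), (N^(m+1)) x = N ((N^m) x) := by
    intro m x; rw [pow_succ']; exact mulApp _ _ _
  have powS2 : ∀ (m : ℕ) (x : H), (N^(m+2)) x = N (N ((N^m) x)) := by
    intro m x
    have h : m + 2 = (m+1)+1 := by omega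
    rw [h, powS, powS]
  have powNcomm : ∀ (m : ℕ) (x : H), (N^m) (N x) = N ((N^m) x) := by
    intro m x
    have := appEq _ _ (((Commute.refl N).pow_left m).eq) x
    simpa only [mulApp] using this
  -- basic commutation identities
  have hNP : N * P = P * N := by
    rw [hN']; simp only [mul_add, add_mul, mul_sub, sub_mul, mul_one, one_mul, mul_assoc,
      hPa, hP2', hRa, hR2']; abel
  have hPZ : P * Z = Z * (1 - P) := by
    rw [hZ']; simp only [mul_add, add_mul, mul_sub, sub_mul, mul_one, one_mul, mul_assoc,
      hPa, hP2', hRa, hR2']; abel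
  have hNQ : (1 - P) * N = N * (1 - P) := by
    have e1 : (1 - P) * N = N - P * N := by noncomm_ring
    rw [e1, ← hNP]; noncomm_ring
  have hQZ : (1 - P) * Z = Z * P := by
    have e1 : (1 - P) * Z = Z - P * Z := by noncomm_ring
    rw [e1, hPZ]; noncomm_ring
  have hNZsum : N + Z = R := by rw [hN', hZ']; noncomm_ring
  have hSS : (P + P - 1) * (P + P - 1) = 1 := by
    simp only [mul_add, add_mul, mul_sub, sub_mul, mul_one, one_mul, mul_assoc,
      hPa, hP2', hRa, hR2']; abel
  have hDiff : N - Z = (P + P - 1) * R * (P + P - 1) := by rw [hN', hZ']; noncomm_ring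
  have e1 : (N + Z) * (N + Z) = 1 := by rw [hNZsum]; exact hR2'
  have e2 : (N - Z) * (N - Z) = 1 := by
    rw [hDiff]
    calc (P+P-1) * R * (P+P-1) * ((P+P-1) * R * (P+P-1))
        = (P+P-1) * R * ((P+P-1) * (P+P-1)) * R * (P+P-1) := by noncomm_ring
      _ = (P+P-1) * (R * R) * (P+P-1) := by rw [hSS]; noncomm_ring
      _ = (P+P-1) * (P+P-1) := by rw [hR2']; noncomm_ring
      _ = 1 := hSS
  have a1 : N*N + (N*Z + Z*N) + Z*Z = 1 := by
    calc N*N + (N*Z + Z*N) + Z*Z = (N+Z)*(N+Z) := by noncomm_ring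
      _ = 1 := e1
  have a2 : N*N - (N*Z + Z*N) + Z*Z = 1 := by
    calc N*N - (N*Z + Z*N) + Z*Z = (N-Z)*(N-Z) := by noncomm_ring
      _ = 1 := e2
  have hXX : (N*Z + Z*N) + (N*Z + Z*N) = 0 := by
    calc (N*Z + Z*N) + (N*Z + Z*N)
        = (N*N + (N*Z + Z*N) + Z*Z) - (N*N - (N*Z + Z*N) + Z*Z) := by abel
      _ = 1 - 1 := by rw [a1, a2]
      _ = 0 := sub_self 1
  have hanticomm : N*Z + Z*N = 0 := by
    have h2 : (2 : ℂ) • (N*Z + Z*N) = 0 := by rw [two_smul]; exact hXX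
    rcases smul_eq_zero.mp h2 with h | h
    · exact absurd h (by norm_num)
    · exact h
  have hZZ : Z * Z = 1 - N * N := by
    calc Z*Z = (N*N + (N*Z + Z*N) + Z*Z) - N*N - (N*Z + Z*N) := by abel
      _ = 1 - N*N - 0 := by rw [a1, hanticomm]
      _ = 1 - N*N := by rw [sub_zero]
  have hZN : Z * N = -(N * Z) := by
    have : Z*N + N*Z = 0 := by rw [add_comm]; exact hanticomm
    exact eq_neg_of_add_eq_zero_left this
  -- self-adjointness
  have hNsa : IsSelfAdjoint N := by
    rw [isSelfAdjoint_iff, hN']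
    simp only [star_add, star_mul, star_sub, star_one, hP.star_eq, hR.star_eq]
    noncomm_ring
  have hZsa : IsSelfAdjoint Z := by
    rw [isSelfAdjoint_iff, hZ']
    simp only [star_add, star_mul, star_sub, star_one, hP.star_eq, hR.star_eq]
    noncomm_ring
  -- Commute facts
  have hCPN : Commute P N := hNP.symm
  have hCQN : Commute (1 - P) N := hNQ
  have hCZM : Commute Z (N * N) := by
    show Z * (N*N) = (N*N) * Z
    calc Z * (N*N) = (Z*N)*N := by rw [mul_assoc]
      _ = (-(N*Z))*N := by rw [hZN]
      _ = -(N*(Z*N)) := by noncomm_ring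
      _ = -(N*(-(N*Z))) := by rw [hZN]
      _ = (N*N)*Z := by noncomm_ring
  have hCTN : Commute (1 - N*N) N :=
    (Commute.one_left N).sub_left ((Commute.refl N).mul_left (Commute.refl N))
  -- applied commutation
  have hPNm : ∀ (m : ℕ) (x : H), P ((N^m) x) = (N^m) (P x) := by
    intro m x
    have := appEq _ _ ((hCPN.pow_right m).eq) x
    simpa only [mulApp] using this
  have hQNm : ∀ (m : ℕ) (x : H), (1-P) ((N^m) x) = (N^m) ((1-P) x) := by
    intro m x
    have := appEq _ _ ((hCQN.pow_right m).eq) x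
    simpa only [mulApp] using this
  -- basic vector facts
  have hQh : ((1:H →L[ℂ] H) - P) h₀ = h₀ := by
    simp [ContinuousLinearMap.sub_apply, hh₀]
  have hPZapp : ∀ x : H, P (Z x) = Z (((1:H →L[ℂ] H)-P) x) := by
    intro x; have := appEq _ _ hPZ x; simpa only [mulApp] using this
  have hQZapp : ∀ x : H, ((1:H →L[ℂ] H)-P) (Z x) = Z (P x) := by
    intro x; have := appEq _ _ hQZ x; simpa only [mulApp] using this
  have hPZh : P (Z h₀) = Z h₀ := by rw [hPZapp, hQh]
  -- P∘R and Q∘R expansions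
  have hPRop : P * R = N * P + Z * (1 - P) := by
    rw [← hNZsum, mul_add, ← hNP, hPZ]
  have hQRop : (1 - P) * R = N * (1 - P) + Z * P := by
    rw [← hNZsum, mul_add, hNQ, hQZ]
  have hPRapp : ∀ x : H, P (R x) = N (P x) + Z (((1:H →L[ℂ] H)-P) x) := by
    intro x; have := appEq _ _ hPRop x
    simpa only [mulApp, ContinuousLinearMap.add_apply] using this
  have hQRapp : ∀ x : H, ((1:H →L[ℂ] H)-P) (R x) = N (((1:H →L[ℂ] H)-P) x) + Z (P x) := by
    intro x; have := appEq _ _ hQRop x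
    simpa only [mulApp, ContinuousLinearMap.add_apply] using this
  have hQRonP : ∀ x : H, P x = x → ((1:H →L[ℂ] H)-P) (R x) = Z x := by
    intro x hx
    have hq : ((1:H →L[ℂ] H)-P) x = 0 := by
      simp [ContinuousLinearMap.sub_apply, hx]
    rw [hQRapp, hq, map_zero, zero_add, hx]
  have hQRonQ : ∀ x : H, ((1:H →L[ℂ] H)-P) x = x → ((1:H →L[ℂ] H)-P) (R x) = N x := by
    intro x hx
    have hp : P x = 0 := by
      have : x - P x = x := by
        simpa [ContinuousLinearMap.sub_apply] using hx
      have := sub_eq_iff_eq_add.mp this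
      simpa using this.symm
    rw [hQRapp, hx, hp, map_zero, add_zero]
  -- the operator A
  set A : H →L[ℂ] H := P ∘L R ∘L P ∘L R with hAdef
  have hAapp : ∀ x : H, A x = P (R (P (R x))) := fun x => rfl
  have hAonP : ∀ x : H, P x = x → A x = N (N x) := by
    intro x hx
    have hq : ((1:H →L[ℂ] H)-P) x = 0 := by
      simp [ContinuousLinearMap.sub_apply, hx]
    have s1 : P (R x) = N x := by rw [hPRapp, hq, map_zero, add_zero, hx]
    have hpn : P (N x) = N x := by
      have := hPNm 1 x
      simpa [pow_one, hx] using this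
    have hqn : ((1:H →L[ℂ] H)-P) (N x) = 0 := by
      have := hQNm 1 x
      simpa [pow_one, hq] using this
    rw [hAapp, s1, hPRapp, hqn, map_zero, add_zero, hpn]
  have hAh₀ : A h₀ = N (Z h₀) := by
    have s1 : P (R h₀) = Z h₀ := by rw [hPRapp, hh₀, map_zero, zero_add, hQh]
    have hqz : ((1:H →L[ℂ] H)-P) (Z h₀) = 0 := by rw [hQZapp, hh₀, map_zero]
    rw [hAapp, s1, hPRapp, hqz, map_zero, add_zero, hPZh]
  have hPfixNm : ∀ m : ℕ, P ((N^m) (Z h₀)) = (N^m) (Z h₀) := by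
    intro m; rw [hPNm, hPZh]
  have hAk : ∀ i : ℕ, (A ^ (i+1)) h₀ = (N^(2*i+1)) (Z h₀) := by
    intro i
    induction i with
    | zero => simpa [pow_one] using hAh₀
    | succ i ih =>
      have : (A ^ (i+2)) h₀ = A ((A ^ (i+1)) h₀) := by
        rw [pow_succ']; exact mulApp _ _ _
      rw [this, ih, hAonP _ (hPfixNm _)]
      have harith : 2*(i+1)+1 = (2*i+1) + 2 := by ring
      rw [harith, powS2]
  -- Z on N^(2k+1) (Z h₀)
  have hZNodd : ∀ k : ℕ, Z * (N^(2*k+1)) = -((N^(2*k+1)) * Z) := by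
    intro k
    have hsplit : (N:H →L[ℂ] H)^(2*k+1) = (N*N)^k * N := by
      rw [pow_succ, pow_mul, pow_two]
    rw [hsplit]
    calc Z * ((N*N)^k * N) = (Z * (N*N)^k) * N := by rw [mul_assoc]
      _ = ((N*N)^k * Z) * N := by rw [(hCZM.pow_right k).eq]
      _ = (N*N)^k * (Z * N) := by rw [mul_assoc]
      _ = (N*N)^k * (-(N*Z)) := by rw [hZN]
      _ = -((N*N)^k * N * Z) := by noncomm_ring
  have hZZh : Z (Z h₀) = h₀ - N (N h₀) := by
    have := appEq _ _ hZZ h₀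
    simpa only [mulApp, ContinuousLinearMap.sub_apply, ContinuousLinearMap.one_apply] using this
  have hZNapp : ∀ k : ℕ, Z ((N^(2*k+1)) (Z h₀)) = (N^(2*k+3)) h₀ - (N^(2*k+1)) h₀ := by
    intro k
    have step1 : Z ((N^(2*k+1)) (Z h₀)) = -((N^(2*k+1)) (Z (Z h₀))) := by
      have := appEq _ _ (hZNodd k) (Z h₀)
      simpa only [mulApp, ContinuousLinearMap.neg_apply] using this
    rw [step1, hZZh, map_sub]
    have : (N^(2*k+1)) (N (N h₀)) = (N^(2*k+3)) h₀ := by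
      have harith : 2*k+3 = (2*k+1) + 2 := by ring
      rw [harith, powS2, powNcomm, powNcomm]
    rw [this]; abel
  -- the partial sums
  have hQfixNm : ∀ m : ℕ, ((1:H →L[ℂ] H)-P) ((N^m) h₀) = (N^m) h₀ := by
    intro m; rw [hQNm, hQh]
  have hQRsum : ∀ k : ℕ,
      ((1:H →L[ℂ] H)-P) (R (∑ i ∈ Finset.range (k + 1), (A ^ i) h₀)) = (N^(2*k+1)) h₀ := by
    intro k
    induction k with
    | zero =>
      have hs : ∑ i ∈ Finset.range (0 + 1), (A ^ i) h₀ = h₀ := by simp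
      rw [hs, hQRonQ _ hQh]
      norm_num
    | succ k ih =>
      rw [Finset.sum_range_succ, map_add, map_add, ih]
      have h2 : ((1:H →L[ℂ] H)-P) (R ((A ^ (k+1)) h₀)) = (N^(2*k+3)) h₀ - (N^(2*k+1)) h₀ := by
        rw [hAk k, hQRonP _ (hPfixNm _), hZNapp k]
      rw [h2]
      have harith : 2*(k+1)+1 = 2*k+3 := by ring
      rw [harith]; abel
  have hQRQRsum : ∀ k : ℕ,
      ((1:H →L[ℂ] H)-P) (R (((1:H →L[ℂ] H)-P) (R (∑ i ∈ Finset.range (k + 1), (A ^ i) h₀))))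
        = (N^(2*k+2)) h₀ := by
    intro k
    rw [hQRsum k, hQRonQ _ (hQfixNm _)]
    have harith : 2*k+2 = (2*k+1) + 1 := by ring
    conv_rhs => rw [harith, powS]
  -- now the convergence part
  set a : H := χ h₀ with hadef
  set w : H := h₀ - a with hwdef
  have haw : a + w = h₀ := by rw [hwdef]; abel
  have hZa : Z a = 0 := by
    have : a ∈ LinearMap.range (χ : H →ₗ[ℂ] H) := ⟨h₀, rfl⟩
    rw [hχrange] at this
    exact this
  have hN2a : N (N a) = a := by
    have h0 : Z (Z a) = a - N (N a) := by
      have := appEq _ _ hZZ a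
      simpa only [mulApp, ContinuousLinearMap.sub_apply, ContinuousLinearMap.one_apply] using this
    rw [hZa, map_zero] at h0
    exact (sub_eq_zero.mp h0.symm).symm
  have hNpow_a : ∀ k : ℕ, (N^(2*k)) a = a := by
    intro k
    induction k with
    | zero => simp
    | succ k ih =>
      have harith : 2*(k+1) = 2*k + 2 := by ring
      rw [harith, powS2, ih, hN2a]
  have hNodd_a : ∀ k : ℕ, (N^(2*k+1)) a = N a := by
    intro k
    rw [powS, hNpow_a]
  have hNeven_a : ∀ k : ℕ, (N^(2*k+2)) a = a := by
    intro k
    have harith : 2*k+2 = 2*(k+1) := by ring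
    rw [harith, hNpow_a]
  -- norm facts
  have projcon : ∀ (T : H →L[ℂ] H), IsSelfAdjoint T → T*T = T → ∀ x : H, ‖T x‖ ≤ ‖x‖ := by
    intro T hTsa hT2 x
    have hsym := hTsa.isSymmetric
    have key : ‖T x‖^2 ≤ ‖x‖ * ‖T x‖ := by
      have c1 : RCLike.re ⟪T x, T x⟫_ℂ = ‖T x‖^2 := inner_self_eq_norm_sq _
      have c2 : ⟪T x, T x⟫_ℂ = ⟪x, T (T x)⟫_ℂ := hsym x (T x)
      have c3 : T (T x) = T x := by rw [← mulApp, hT2]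
      have c4 : RCLike.re ⟪x, T x⟫_ℂ ≤ ‖(⟪x, T x⟫_ℂ : ℂ)‖ := RCLike.re_le_norm _
      have c5 : ‖(⟪x, T x⟫_ℂ : ℂ)‖ ≤ ‖x‖ * ‖T x‖ := norm_inner_le_norm _ _
      calc ‖T x‖^2 = RCLike.re ⟪T x, T x⟫_ℂ := c1.symm
        _ = RCLike.re ⟪x, T x⟫_ℂ := by rw [c2, c3]
        _ ≤ ‖(⟪x, T x⟫_ℂ : ℂ)‖ := c4
        _ ≤ ‖x‖ * ‖T x‖ := c5
    nlinarith [norm_nonneg (T x), norm_nonneg x]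
  have hQsa : IsSelfAdjoint ((1:H →L[ℂ] H) - P) := by
    rw [isSelfAdjoint_iff]
    simp [star_sub, star_one, hP.star_eq]
  have hQ2' : ((1:H →L[ℂ] H) - P) * ((1:H →L[ℂ] H) - P) = (1:H →L[ℂ] H) - P := by
    simp only [mul_sub, sub_mul, mul_one, one_mul, hP2']; abel
  have hPcon := projcon P hP hP2'
  have hQcon := projcon ((1:H →L[ℂ] H) - P) hQsa hQ2'
  have hRiso : ∀ x : H, ‖R x‖ = ‖x‖ := by
    intro x
    have hsym := hR.isSymmetric
    have c2 : ⟪R x, R x⟫_ℂ = ⟪x, R (R x)⟫_ℂ := hsym x (R x)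
    have c3 : R (R x) = x := by
      rw [← mulApp, hR2', ContinuousLinearMap.one_apply]
    have h2 : ‖R x‖^2 = ‖x‖^2 := by
      rw [← inner_self_eq_norm_sq (𝕜 := ℂ) (R x), c2, c3, inner_self_eq_norm_sq]
    have := norm_nonneg (R x); have := norm_nonneg x
    nlinarith
  have hNcon : ∀ x : H, ‖N x‖ ≤ ‖x‖ := by
    intro x
    have hexp : N x = P (R (P x)) + ((1:H →L[ℂ] H)-P) (R (((1:H →L[ℂ] H)-P) x)) := by
      have := appEq _ _ hN' x
      simpa only [mulApp, ContinuousLinearMap.add_apply] using this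
    set u := P (R (P x)) with hu
    set v := ((1:H →L[ℂ] H)-P) (R (((1:H →L[ℂ] H)-P) x)) with hv
    have horth : ⟪u, v⟫_ℂ = 0 := by
      have hPQ : P * ((1:H →L[ℂ] H) - P) = 0 := by
        simp only [mul_sub, mul_one, hP2']; abel
      have : ⟪u, v⟫_ℂ = ⟪R (P x), P (((1:H →L[ℂ] H)-P) (R (((1:H →L[ℂ] H)-P) x)))⟫_ℂ :=
        hP.isSymmetric _ _
      rw [this]
      have : P (((1:H →L[ℂ] H)-P) (R (((1:H →L[ℂ] H)-P) x))) = 0 := by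
        rw [← mulApp, hPQ]; rfl
      rw [this, inner_zero_right]
    have hnorm2 : ‖N x‖^2 = ‖u‖^2 + ‖v‖^2 := by
      rw [hexp, norm_add_sq (𝕜 := ℂ), horth]
      simp
    have hub : ‖u‖ ≤ ‖P x‖ := by
      calc ‖u‖ ≤ ‖R (P x)‖ := hPcon _
        _ = ‖P x‖ := hRiso _
    have hvb : ‖v‖ ≤ ‖((1:H →L[ℂ] H)-P) x‖ := by
      calc ‖v‖ ≤ ‖R (((1:H →L[ℂ] H)-P) x)‖ := hQcon _
        _ = ‖((1:H →L[ℂ] H)-P) x‖ := hRiso _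
    have hpyth : ‖P x‖^2 + ‖((1:H →L[ℂ] H)-P) x‖^2 = ‖x‖^2 := by
      have cP : ‖P x‖^2 = RCLike.re ⟪x, P x⟫_ℂ := by
        calc ‖P x‖^2 = RCLike.re ⟪P x, P x⟫_ℂ := (inner_self_eq_norm_sq _).symm
          _ = RCLike.re ⟪x, P (P x)⟫_ℂ := by exact congrArg _ (hP.isSymmetric x (P x))
          _ = RCLike.re ⟪x, P x⟫_ℂ := by
              rw [show P (P x) = P x from by rw [← mulApp, hP2']]
      have cQ : ‖((1:H →L[ℂ] H)-P) x‖^2 = RCLike.re ⟪x, ((1:H →L[ℂ] H)-P) x⟫_ℂ := by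
        calc ‖((1:H →L[ℂ] H)-P) x‖^2
            = RCLike.re ⟪((1:H →L[ℂ] H)-P) x, ((1:H →L[ℂ] H)-P) x⟫_ℂ :=
              (inner_self_eq_norm_sq _).symm
          _ = RCLike.re ⟪x, ((1:H →L[ℂ] H)-P) (((1:H →L[ℂ] H)-P) x)⟫_ℂ := by
              exact congrArg _ (hQsa.isSymmetric x (((1:H →L[ℂ] H)-P) x))
          _ = RCLike.re ⟪x, ((1:H →L[ℂ] H)-P) x⟫_ℂ := by
              rw [show ((1:H →L[ℂ] H)-P) (((1:H →L[ℂ] H)-P) x) = ((1:H →L[ℂ] H)-P) x from by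
                rw [← mulApp, hQ2']]
      have sum_x : P x + ((1:H →L[ℂ] H)-P) x = x := by
        simp [ContinuousLinearMap.sub_apply]
      calc ‖P x‖^2 + ‖((1:H →L[ℂ] H)-P) x‖^2
          = RCLike.re ⟪x, P x⟫_ℂ + RCLike.re ⟪x, ((1:H →L[ℂ] H)-P) x⟫_ℂ := by rw [cP, cQ]
        _ = RCLike.re (⟪x, P x⟫_ℂ + ⟪x, ((1:H →L[ℂ] H)-P) x⟫_ℂ) := (map_add _ _ _).symm
        _ = RCLike.re ⟪x, P x + ((1:H →L[ℂ] H)-P) x⟫_ℂ := by rw [← inner_add_right]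
        _ = RCLike.re ⟪x, x⟫_ℂ := by rw [sum_x]
        _ = ‖x‖^2 := inner_self_eq_norm_sq x
    nlinarith [hub, hvb, norm_nonneg u, norm_nonneg v, norm_nonneg (P x),
      norm_nonneg (((1:H →L[ℂ] H)-P) x), norm_nonneg (N x), norm_nonneg x, hnorm2, hpyth]
  have hNmcon : ∀ (m : ℕ) (x : H), ‖(N^m) x‖ ≤ ‖x‖ := by
    intro m
    induction m with
    | zero => intro x; simp
    | succ m ih =>
      intro x
      have : (N^(m+1)) x = (N^m) (N x) := by rw [pow_succ, mulApp]
      rw [this]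
      exact le_trans (ih (N x)) (hNcon x)
  -- w is in the closure of the range of T := 1 - N*N
  set T : H →L[ℂ] H := 1 - N*N with hTdef
  have hTsa : IsSelfAdjoint T := by
    rw [isSelfAdjoint_iff, hTdef]
    simp [star_sub, star_one, star_mul, hNsa.star_eq]
  have hTapp : ∀ x : H, T x = x - N (N x) := by
    intro x
    simp only [hTdef, ContinuousLinearMap.sub_apply, ContinuousLinearMap.one_apply, mulApp]
  have hkerT : ∀ x : H, T x = 0 → Z x = 0 := by
    intro x hx
    have hZZx : Z (Z x) = 0 := by
      have := appEq _ _ hZZ x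
      simp only [mulApp] at this
      rw [this]
      have : ((1:H →L[ℂ] H) - N*N) x = T x := rfl
      rw [this, hx]
    have : ⟪Z x, Z x⟫_ℂ = 0 := by
      calc ⟪Z x, Z x⟫_ℂ = ⟪x, Z (Z x)⟫_ℂ := hZsa.isSymmetric x (Z x)
        _ = 0 := by rw [hZZx, inner_zero_right]
    exact inner_self_eq_zero.mp this
  have hworth : ∀ u : H, Z u = 0 → ⟪u, w⟫_ℂ = 0 := by
    intro u hu
    have hrange : u ∈ LinearMap.range (χ : H →ₗ[ℂ] H) := by rw [hχrange]; exact hu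
    obtain ⟨u', rfl⟩ := hrange
    have hχw : χ w = 0 := by
      rw [hwdef, map_sub, hadef]
      have : χ (χ h₀) = χ h₀ := by rw [← mulApp, hχ2']
      rw [this, sub_self]
    calc ⟪χ u', w⟫_ℂ = ⟪u', χ w⟫_ℂ := hχ.isSymmetric u' w
      _ = 0 := by rw [hχw, inner_zero_right]
  have hwcl : w ∈ closure ((LinearMap.range (T : H →ₗ[ℂ] H) : Submodule ℂ H) : Set H) := by
    set K : Submodule ℂ H := (LinearMap.range (T : H →ₗ[ℂ] H)).topologicalClosure with hKdef
    haveI : CompleteSpace K := (LinearMap.range (T : H →ₗ[ℂ] H)).isClosed_topologicalClosure.completeSpace_coe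
    obtain ⟨y, hy, z, hz, hwyz⟩ := K.exists_add_mem_mem_orthogonal w
    have hzker : Z z = 0 := by
      apply hkerT
      have hTz : ∀ v : H, ⟪z, T v⟫_ℂ = 0 := by
        intro v
        have hTvK : T v ∈ K := (LinearMap.range (T : H →ₗ[ℂ] H)).le_topologicalClosure ⟨v, rfl⟩
        have := (Submodule.mem_orthogonal K z).mp hz (T v) hTvK
        rw [← inner_conj_symm, this, map_zero]
      have : ⟪T z, T z⟫_ℂ = 0 := by
        calc ⟪T z, T z⟫_ℂ = ⟪z, T (T z)⟫_ℂ := hTsa.isSymmetric z (T z)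
          _ = 0 := hTz (T z)
      exact inner_self_eq_zero.mp this
    have hzz : ⟪z, z⟫_ℂ = 0 := by
      have h1 : ⟪z, w⟫_ℂ = 0 := hworth z hzker
      have h2 : ⟪z, y⟫_ℂ = 0 := by
        have := (Submodule.mem_orthogonal K z).mp hz y hy
        rw [← inner_conj_symm, this, map_zero]
      rw [hwyz, inner_add_right, h2, zero_add] at h1
      exact h1
    have hz0 : z = 0 := inner_self_eq_zero.mp hzz
    have hwK : w ∈ K := by rw [hwyz, hz0, add_zero]; exact hy
    exact hwK
  -- the algebraic identity for each k
  have key : ∀ k : ℕ,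
      ((1:H →L[ℂ] H)-P) (R (∑ i ∈ Finset.range (k + 1), (A ^ i) h₀)) -
        ((1:H →L[ℂ] H)-P) (R (((1:H →L[ℂ] H)-P) (R (∑ i ∈ Finset.range (k + 1), (A ^ i) h₀))))
      = (N a - a) + ((N^(2*k+1)) w - (N^(2*k+2)) w) := by
    intro k
    rw [hQRsum k]
    rw [hQRonQ _ (hQfixNm _)]
    have h3 : N ((N^(2*k+1)) h₀) = (N^(2*k+2)) h₀ := by
      conv_rhs => rw [show 2*k+2 = (2*k+1)+1 from by omega, powS]
    have h1 : (N^(2*k+1)) h₀ = N a + (N^(2*k+1)) w := by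
      have e : (N^(2*k+1)) h₀ = (N^(2*k+1)) a + (N^(2*k+1)) w := by
        rw [← map_add, haw]
      rw [e, hNodd_a]
    have h2 : (N^(2*k+2)) h₀ = a + (N^(2*k+2)) w := by
      have e : (N^(2*k+2)) h₀ = (N^(2*k+2)) a + (N^(2*k+2)) w := by
        rw [← map_add, haw]
      rw [e, hNeven_a]
    rw [h3, h1, h2]; abel
  -- commutation of T with powers of N
  have hTcomm : ∀ (m : ℕ) (x : H), (N^m) (T x) = T ((N^m) x) := by
    intro m x
    have e : (N^m) * T = T * (N^m) := by
      rw [hTdef]; exact (hCTN.symm.pow_left m).eq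
    have := appEq _ _ e x
    simpa only [mulApp] using this
  -- convergence of the w-part to 0
  have hw0 : Tendsto (fun k : ℕ => (N^(2*k+1)) w - (N^(2*k+2)) w) atTop (nhds 0) := by
    rw [NormedAddCommGroup.tendsto_nhds_zero]
    intro ε hε
    have hε4 : (0:ℝ) < ε/4 := by positivity
    obtain ⟨b, hb, hdist⟩ := Metric.mem_closure_iff.mp hwcl (ε/4) hε4
    obtain ⟨v, rfl⟩ := hb
    have hdist' : ‖w - T v‖ < ε/4 := by rwa [dist_eq_norm] at hdist
    set d : ℕ → ℝ := fun j => ‖(N^j) v‖^2 with hd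
    have hdanti : Antitone d := by
      apply antitone_nat_of_succ_le
      intro j
      have h1 : ‖(N^(j+1)) v‖ ≤ ‖(N^j) v‖ := by rw [powS]; exact hNcon _
      have h0 := norm_nonneg ((N^(j+1)) v)
      simp only [hd]
      nlinarith [norm_nonneg ((N^j) v)]
    have hdbdd : BddBelow (Set.range d) := ⟨0, by rintro x ⟨j, rfl⟩; positivity⟩
    have hdconv : Tendsto d atTop (nhds (⨅ j, d j)) := tendsto_atTop_ciInf hdanti hdbdd
    have hmul2 : Tendsto (fun k : ℕ => 2*k) atTop atTop :=
      tendsto_atTop_atTop.mpr (fun b => ⟨b, fun a ha => by omega⟩)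
    have hmul21 : Tendsto (fun k : ℕ => 2*k+1) atTop atTop :=
      tendsto_atTop_atTop.mpr (fun b => ⟨b, fun a ha => by omega⟩)
    have hdiff0 : Tendsto (fun k : ℕ => d (2*k) - d (2*k+1)) atTop (nhds 0) := by
      have := (hdconv.comp hmul2).sub (hdconv.comp hmul21)
      simpa [Function.comp] using this
    have hev := hdiff0.eventually_lt_const (show (0:ℝ) < (ε/4)^2 by positivity)
    filter_upwards [hev] with k hk
    set g : H := T ((N^(2*k)) v) with hg
    have c1 : (N^(2*k+1)) (T v) = N g := by rw [powS, hTcomm]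
    have c2 : (N^(2*k+2)) (T v) = N (N g) := by rw [powS2, hTcomm]
    have dec : (N^(2*k+1)) w - (N^(2*k+2)) w
        = ((N^(2*k+1)) (w - T v) - (N^(2*k+2)) (w - T v)) + (N g - N (N g)) := by
      rw [map_sub (N^(2*k+1)) w (T v), map_sub (N^(2*k+2)) w (T v), c1, c2]; abel
    have n1 : ‖(N^(2*k+1)) (w - T v)‖ ≤ ‖w - T v‖ := hNmcon _ _
    have n2 : ‖(N^(2*k+2)) (w - T v)‖ ≤ ‖w - T v‖ := hNmcon _ _
    have hgsq : ‖g‖^2 ≤ d (2*k) - d (2*k+1) := by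
      set y : H := (N^(2*k)) v with hy
      have hgeq : g = y - N (N y) := by rw [hg, hTapp]
      have hip : RCLike.re ⟪y, N (N y)⟫_ℂ = ‖N y‖^2 := by
        have h1 : ⟪N y, N y⟫_ℂ = ⟪y, N (N y)⟫_ℂ := hNsa.isSymmetric y (N y)
        rw [← h1, inner_self_eq_norm_sq]
      have hnorm : ‖g‖^2 = ‖y‖^2 - 2*‖N y‖^2 + ‖N (N y)‖^2 := by
        rw [hgeq, norm_sub_sq (𝕜 := ℂ), hip]
      have hNyeq : N y = (N^(2*k+1)) v := (powS _ _).symm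
      have hNyd : ‖N y‖^2 = d (2*k+1) := by rw [hNyeq]
      have hyd : ‖y‖^2 = d (2*k) := rfl
      have hNNy : ‖N (N y)‖ ≤ ‖N y‖ := hNcon _
      have hsq : ‖N (N y)‖^2 ≤ ‖N y‖^2 :=
        pow_le_pow_left₀ (norm_nonneg _) hNNy 2
      linarith [hnorm, hyd, hNyd, hsq]
    have hgnorm : ‖g‖ < ε/4 := by
      have h1 : ‖g‖^2 < (ε/4)^2 := lt_of_le_of_lt hgsq hk
      exact lt_of_pow_lt_pow_left₀ 2 (le_of_lt hε4) h1
    calc ‖(N^(2*k+1)) w - (N^(2*k+2)) w‖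
        ≤ ‖(N^(2*k+1)) (w - T v) - (N^(2*k+2)) (w - T v)‖ + ‖N g - N (N g)‖ := by
          rw [dec]; exact norm_add_le _ _
      _ ≤ (‖(N^(2*k+1)) (w - T v)‖ + ‖(N^(2*k+2)) (w - T v)‖) + (‖N g‖ + ‖N (N g)‖) :=
          add_le_add (norm_sub_le _ _) (norm_sub_le _ _)
      _ ≤ (‖w - T v‖ + ‖w - T v‖) + (‖g‖ + ‖g‖) :=
          add_le_add (add_le_add n1 n2)
            (add_le_add (hNcon g) ((hNcon (N g)).trans (hNcon g)))
      _ < ε := by linarith [hdist', hgnorm]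
  -- assemble
  have hconst : Tendsto (fun _ : ℕ => N a - a) atTop (nhds (N a - a)) := tendsto_const_nhds
  have hsum := hconst.add hw0
  rw [add_zero] at hsum
  have hlim : (N - 1) a = N a - a := by
    simp [ContinuousLinearMap.sub_apply, ContinuousLinearMap.one_apply]
  rw [hlim]
  exact hsum.congr (fun k => (key k).symm)
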